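/- For the affine symplectic group action on functions on ℝ², the derivations ∇₁' = (u_xu_{yy} − u_yu_{xy})D_x − (u_xu_{xy} − u_yu_{xx})D_y and ∇₂ = u_x D_y − u_y D_x satisfy the commutator relation [∇₁', ∇₂] = −(∇₂(I_{2c})/I_{2c})∇₁' + (∇₁'(I_{2c})/I_{2c} − 2I₂')∇₂, where I₂' = u_{xx}u_{yy} − u_{xy}² (the Hessian) and I_{2c} = u_x²u_{yy} − 2u_xu_yu_{xy} + u_y²u_{xx}. -/

import Mathlib

open Matrix

noncomputable section

/-- Coordinates on `J³ℝ²`: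
`(x, y, u, u_x, u_y, u_xx, u_xy, u_yy, u_xxx, u_xxy, u_xyy, u_yyy)`. -/
def Dx (F : (Fin 12 → ℝ) → ℝ) : (Fin 12 → ℝ) → ℝ := fun p =>
  fderiv ℝ F p ![1, 0, p 3, p 5, p 6, p 8, p 9, p 10, 0, 0, 0, 0]

def Dy (F : (Fin 12 → ℝ) → ℝ) : (Fin 12 → ℝ) → ℝ := fun p =>
  fderiv ℝ F p ![0, 1, p 4, p 6, p 7, p 9, p 10, p 11, 0, 0, 0, 0]

/-- `D_x`-coefficient of `∇₁' = (u_xu_yy − u_yu_xy)D_x − (u_xu_xy − u_yu_xx)D_y`. -/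
def A1 : (Fin 12 → ℝ) → ℝ := fun p => p 3 * p 7 - p 4 * p 6
/-- `D_y`-coefficient of `∇₁'`. -/
def B1 : (Fin 12 → ℝ) → ℝ := fun p => -(p 3 * p 6 - p 4 * p 5)
/-- `D_x`-coefficient of `∇₂ = u_x D_y − u_y D_x`. -/
def A2 : (Fin 12 → ℝ) → ℝ := fun p => -(p 4)
/-- `D_y`-coefficient of `∇₂`. -/
def B2 : (Fin 12 → ℝ) → ℝ := fun p => p 3

/-- `∇₁'`. -/
def Nabla1' (F : (Fin 12 → ℝ) → ℝ) : (Fin 12 → ℝ) → ℝ := fun p =>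
  A1 p * Dx F p + B1 p * Dy F p

/-- `∇₂`. -/
def Nabla2 (F : (Fin 12 → ℝ) → ℝ) : (Fin 12 → ℝ) → ℝ := fun p =>
  A2 p * Dx F p + B2 p * Dy F p

/-- The Hessian `I₂' = u_xx u_yy − u_xy²`. -/
def I2' : (Fin 12 → ℝ) → ℝ := fun p => p 5 * p 7 - (p 6) ^ 2

def I2c : (Fin 12 → ℝ) → ℝ := fun p =>
  (p 3) ^ 2 * p 7 - 2 * p 3 * p 4 * p 6 + (p 4) ^ 2 * p 5

lemma hproj (i : Fin 12) (p : Fin 12 → ℝ) :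
    HasFDerivAt (fun q : Fin 12 → ℝ => q i)
      (ContinuousLinearMap.proj i : (Fin 12 → ℝ) →L[ℝ] ℝ) p :=
  (ContinuousLinearMap.proj i : (Fin 12 → ℝ) →L[ℝ] ℝ).hasFDerivAt

lemma fdA1 (p v : Fin 12 → ℝ) :
    fderiv ℝ A1 p v = v 3 * p 7 + p 3 * v 7 - (v 4 * p 6 + p 4 * v 6) := by
  have h := (((hproj 3 p).mul (hproj 7 p)).sub ((hproj 4 p).mul (hproj 6 p))).fderiv
  erw [show A1 = fun q : Fin 12 → ℝ => q 3 * q 7 - q 4 * q 6 from rfl, h]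
  simp; ring

lemma fdB1 (p v : Fin 12 → ℝ) :
    fderiv ℝ B1 p v = -(v 3 * p 6 + p 3 * v 6 - (v 4 * p 5 + p 4 * v 5)) := by
  have h := ((((hproj 3 p).mul (hproj 6 p)).sub ((hproj 4 p).mul (hproj 5 p))).neg).fderiv
  erw [show B1 = fun q : Fin 12 → ℝ => -(q 3 * q 6 - q 4 * q 5) from rfl, h]
  simp; ring

lemma fdA2 (p v : Fin 12 → ℝ) : fderiv ℝ A2 p v = -(v 4) := by
  have h := ((hproj 4 p).neg).fderiv
  erw [show A2 = fun q : Fin 12 → ℝ => -(q 4) from rfl, h]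
  simp

lemma fdB2 (p v : Fin 12 → ℝ) : fderiv ℝ B2 p v = v 3 := by
  have h := (hproj 3 p).fderiv
  rw [show B2 = fun q : Fin 12 → ℝ => q 3 from rfl, h]
  simp

lemma fdI2c (p v : Fin 12 → ℝ) :
    fderiv ℝ I2c p v = (2 * p 3 * v 3) * p 7 + p 3 ^ 2 * v 7
      - (2 * v 3 * p 4 * p 6 + 2 * p 3 * v 4 * p 6 + 2 * p 3 * p 4 * v 6)
      + ((2 * p 4 * v 4) * p 5 + p 4 ^ 2 * v 5) := by
  have h := (((((hproj 3 p).mul (hproj 3 p)).mul (hproj 7 p)).sub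
      ((((hproj 3 p).const_mul 2).mul (hproj 4 p)).mul (hproj 6 p))).add
      ((((hproj 4 p).mul (hproj 4 p)).mul (hproj 5 p)))).fderiv
  erw [show I2c = fun q : Fin 12 → ℝ =>
      q 3 * q 3 * q 7 - 2 * q 3 * q 4 * q 6 + q 4 * q 4 * q 5 by funext q; simp [I2c]; ring, h]
  simp; ring

/-- `[∇₁', ∇₂] = −(∇₂(I_{2c})/I_{2c})∇₁' + (∇₁'(I_{2c})/I_{2c} − 2I₂')∇₂`,
as a polynomial identity after clearing the denominator `I_{2c}`, componentwise
in the coefficients of `D_x` and `D_y`, where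
`[∇,∇'] = (∇(a') − ∇'(a))D_x + (∇(b') − ∇'(b))D_y`. -/
theorem stmt_14 : ∀ p : Fin 12 → ℝ,
    I2c p * (Nabla1' A2 p - Nabla2 A1 p)
      = -(Nabla2 I2c p) * A1 p + (Nabla1' I2c p - 2 * I2' p * I2c p) * A2 p ∧
    I2c p * (Nabla1' B2 p - Nabla2 B1 p)
      = -(Nabla2 I2c p) * B1 p + (Nabla1' I2c p - 2 * I2' p * I2c p) * B2 p := by
  intro p
  constructor <;>
  · simp only [Nabla1', Nabla2, Dx, Dy, fdA1, fdB1, fdA2, fdB2, fdI2c, A1, B1, A2, B2, I2', I2c,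
      Matrix.cons_val_zero, Matrix.cons_val_one, Matrix.head_cons]
    simp only [show (![(1:ℝ), 0, p 3, p 5, p 6, p 8, p 9, p 10, 0, 0, 0, 0]) (3:Fin 12) = p 5 from rfl,
      show (![(1:ℝ), 0, p 3, p 5, p 6, p 8, p 9, p 10, 0, 0, 0, 0]) (4:Fin 12) = p 6 from rfl,
      show (![(1:ℝ), 0, p 3, p 5, p 6, p 8, p 9, p 10, 0, 0, 0, 0]) (5:Fin 12) = p 8 from rfl,
      show (![(1:ℝ), 0, p 3, p 5, p 6, p 8, p 9, p 10, 0, 0, 0, 0]) (6:Fin 12) = p 9 from rfl,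
      show (![(1:ℝ), 0, p 3, p 5, p 6, p 8, p 9, p 10, 0, 0, 0, 0]) (7:Fin 12) = p 10 from rfl,
      show (![(0:ℝ), 1, p 4, p 6, p 7, p 9, p 10, p 11, 0, 0, 0, 0]) (3:Fin 12) = p 6 from rfl,
      show (![(0:ℝ), 1, p 4, p 6, p 7, p 9, p 10, p 11, 0, 0, 0, 0]) (4:Fin 12) = p 7 from rfl,
      show (![(0:ℝ), 1, p 4, p 6, p 7, p 9, p 10, p 11, 0, 0, 0, 0]) (5:Fin 12) = p 9 from rfl,
      show (![(0:ℝ), 1, p 4, p 6, p 7, p 9, p 10, p 11, 0, 0, 0, 0]) (6:Fin 12) = p 10 from rfl,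
      show (![(0:ℝ), 1, p 4, p 6, p 7, p 9, p 10, p 11, 0, 0, 0, 0]) (7:Fin 12) = p 11 from rfl]
    ring
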